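/- Let A be a one-generator left brace of multipermutation level 2. Then there exist an automorphism ψ of the additive group (A,+) and an element x ∈ A such that: (1) the orbit {ψ^z(x) : z ∈ ℤ} has more than one element and generates the group (A,+); and (2) for all k ∈ ℕ and all integers a_1, …, a_k, z_1, …, z_k, if a_1 ψ^{z_1}(x) + ⋯ + a_k ψ^{z_k}(x) = 0 then ψ^{a_1 + ⋯ + a_k} = id_A. -/

import Mathlib

set_option linter.unusedSectionVars false
set_option maxHeartbeats 1000000


/-- A left brace structure on a type carrying an abelian additive group structure `+`
and a (multiplicative) group structure `∘` (written `*`). -/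
class LeftBrace (A : Type*) [AddCommGroup A] [Group A] : Prop where
  compat : ∀ a b c : A, a * (b + c) + a = a * b + a * c

section Brace

variable {A : Type*} [AddCommGroup A] [Group A]

/-- The map `λ_a : b ↦ -a + a ∘ b`, as a permutation of `A`. -/
def lam (a : A) : Equiv.Perm A where
  toFun b := -a + a * b
  invFun b := a⁻¹ * (a + b)
  left_inv b := by simp
  right_inv b := by simp

/-- A subset of a left brace is a sub-left-brace if it is simultaneously (the carrier of)
a subgroup of `(A,+)` and a subgroup of `(A,∘)`. -/
def IsSubBrace (B : Set A) : Prop :=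
  ∃ (Sa : AddSubgroup A) (Sm : Subgroup A), (Sa : Set A) = B ∧ (Sm : Set A) = B

/-- `A(x)`: the smallest sub-left-brace containing `x`. -/
def braceClosure (x : A) : Set A := ⋂₀ {B : Set A | IsSubBrace B ∧ x ∈ B}

end Brace

/-- The socle series of a left brace: `Soc_0 = {0}`,
`Soc_{n+1} = {a | ∀ b, a + b - a∘b ∈ Soc_n}`. -/
def socSeq (A : Type*) [AddCommGroup A] [Group A] : ℕ → Set A
  | 0 => {0}
  | n + 1 => {a | ∀ b, a + b - a * b ∈ socSeq A n}

/-- A left brace has multipermutation level `n` if `n` is minimal with `Soc_n(A) = A`. -/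
def BraceMPL (A : Type*) [AddCommGroup A] [Group A] (n : ℕ) : Prop :=
  socSeq A n = Set.univ ∧ ∀ m < n, socSeq A m ≠ Set.univ

section Lemmas
variable {A : Type*} [AddCommGroup A] [Group A] [LeftBrace A]

lemma lam_apply' (a b : A) : lam a b = -a + a * b := rfl

lemma one_eq_zero' : (1 : A) = 0 := by
  have h := LeftBrace.compat (1 : A) 0 0
  simpa using h

lemma lam_add_arg (a b c : A) : lam a (b + c) = lam a b + lam a c := by
  have h := LeftBrace.compat a b c
  simp only [lam_apply']
  have h2 : a * (b + c) = a * b + a * c - a := by rw [← h]; abel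
  rw [h2]; abel

lemma lam_neg_arg (a b : A) : lam a (-b) = -(lam a b) := by
  have h : lam a (b + -b) = lam a b + lam a (-b) := lam_add_arg a b (-b)
  have h0 : lam a (0 : A) = 0 := by
    have := lam_add_arg a 0 0
    rw [add_zero] at this
    exact left_eq_add.mp this
  rw [add_neg_cancel, h0] at h
  exact eq_neg_of_add_eq_zero_right h.symm

lemma mul_eq_add_lam (a b : A) : a * b = a + lam a b := by
  rw [lam_apply']; abel

lemma lam_one_arg0 (b : A) : lam (1 : A) b = b := by
  rw [lam_apply', one_mul, one_eq_zero', neg_zero, zero_add]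

lemma lam_zero_arg0 (b : A) : lam (0 : A) b = b := by
  rw [show (0 : A) = 1 from one_eq_zero'.symm]; exact lam_one_arg0 b

lemma lam_mul' (a b c : A) : lam (a * b) c = lam a (lam b c) := by
  have h1 : lam a (lam b c) = -(lam a b) + lam a (b * c) := by
    rw [lam_apply' b c, lam_add_arg, lam_neg_arg]
  rw [h1, lam_apply', lam_apply', lam_apply', ← mul_assoc]
  abel

lemma lam_inv_lam (a c : A) : lam a⁻¹ (lam a c) = c := by
  rw [← lam_mul', inv_mul_cancel, lam_one_arg0]

lemma lam_lam_inv (a c : A) : lam a (lam a⁻¹ c) = c := by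
  rw [← lam_mul', mul_inv_cancel, lam_one_arg0]

lemma lam_a_inv (a : A) : lam a a⁻¹ = -a := by
  have h := mul_eq_add_lam a a⁻¹
  rw [mul_inv_cancel, one_eq_zero'] at h
  exact eq_neg_of_add_eq_zero_right h.symm

lemma conj_eq_lam (c s : A) (hS : ∀ b, lam s b = b) : c * s * c⁻¹ = lam c s := by
  rw [mul_eq_add_lam (c*s) c⁻¹, lam_mul', hS, lam_a_inv, mul_eq_add_lam c s]
  abel

lemma Sc_lam (c s : A) (hS : ∀ b, lam s b = b) : ∀ b, lam (lam c s) b = b := by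
  intro b
  rw [← conj_eq_lam c s hS, lam_mul', lam_mul', hS, lam_lam_inv]

lemma lam_add_soc (u s : A) (hS : ∀ b, lam s b = b) (c : A) :
    lam (u + s) c = lam u c := by
  have ht := Sc_lam u⁻¹ s hS
  have h1 : u * (lam u⁻¹ s) = u + s := by rw [mul_eq_add_lam, lam_lam_inv]
  rw [← h1, lam_mul', ht c]

lemma lam_add_lam (hs : ∀ a b : A, ∀ c, lam (a + b - a * b) c = c) (a b c : A) :
    lam (a + b) c = lam a (lam b c) := by
  have h1 : a + b = a * b + (a + b - a * b) := by abel
  rw [h1, lam_add_soc _ _ (hs a b), lam_mul']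

lemma lam_lam (hs : ∀ a b : A, ∀ c, lam (a + b - a * b) c = c) (a b c : A) :
    lam (lam a b) c = lam b c := by
  rw [lam_apply' a b, lam_add_lam hs, lam_mul', ← lam_add_lam hs, neg_add_cancel,
    lam_zero_arg0]

def lamA (a : A) : AddAut A := { lam a with map_add' := lam_add_arg a }

lemma lamA_apply (a b : A) : lamA a b = lam a b := rfl

end Lemmas


section Helpers
variable {A : Type*} [AddCommGroup A] [Group A]

lemma isSubBrace_of (S : Set A) (h0 : (0:A) ∈ S)
    (hadd : ∀ u v : A, u ∈ S → v ∈ S → u + v ∈ S)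
    (hneg : ∀ u : A, u ∈ S → -u ∈ S)
    (h1 : (1:A) ∈ S)
    (hmul : ∀ u v : A, u ∈ S → v ∈ S → u * v ∈ S)
    (hinv : ∀ u : A, u ∈ S → u⁻¹ ∈ S) : IsSubBrace S :=
  ⟨{ carrier := S, zero_mem' := h0, add_mem' := fun hu hv => hadd _ _ hu hv,
     neg_mem' := fun hu => hneg _ hu },
   { carrier := S, one_mem' := h1, mul_mem' := fun hu hv => hmul _ _ hu hv,
     inv_mem' := fun hu => hinv _ hu }, rfl, rfl⟩

end Helpers

section Main
variable {A : Type*} [AddCommGroup A] [Group A] [LeftBrace A]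

lemma lam_map_zero (a : A) : lam a (0 : A) = 0 := by
  have := lam_add_arg a 0 0
  rw [add_zero] at this
  exact left_eq_add.mp this

lemma degenerate (hs : ∀ a b : A, ∀ c, lam (a + b - a * b) c = c)
    {x : A} (hx : braceClosure x = Set.univ) (hfix : lam x x = x) :
    ∀ a b : A, lam a b = b := by
  have hfrom_univ : ∀ (S : Set A), IsSubBrace S → x ∈ S → ∀ a : A, a ∈ S := by
    intro S hS hxS a
    have h1 : a ∈ braceClosure x := by rw [hx]; trivial
    exact Set.sInter_subset_of_mem (S := {B : Set A | IsSubBrace B ∧ x ∈ B}) ⟨hS, hxS⟩ h1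
  have hT : ∀ a : A, lam a x = x := by
    have hsub : IsSubBrace {a : A | lam a x = x} := by
      refine isSubBrace_of _ (lam_zero_arg0 x) ?_ ?_ (lam_one_arg0 x) ?_ ?_
      · intro u v hu hv
        show lam (u + v) x = x
        rw [lam_add_lam hs, hv, hu]
      · intro u hu
        show lam (-u) x = x
        conv_lhs => rw [← hu]
        rw [← lam_add_lam hs, neg_add_cancel, lam_zero_arg0]
      · intro u v hu hv
        show lam (u * v) x = x
        rw [lam_mul', hv, hu]
      · intro u hu
        show lam u⁻¹ x = x
        conv_lhs => rw [← hu]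
        exact lam_inv_lam u x
    exact hfrom_univ _ hsub hfix
  have hU : ∀ b : A, ∀ a : A, lam a b = b := by
    have hsub : IsSubBrace {b : A | ∀ a : A, lam a b = b} := by
      refine isSubBrace_of _ (fun a => lam_map_zero a) ?_ ?_ ?_ ?_ ?_
      · intro u v hu hv a
        rw [lam_add_arg, hu a, hv a]
      · intro u hu a
        rw [lam_neg_arg, hu a]
      · intro a
        show lam a (1 : A) = 1
        rw [one_eq_zero']; exact lam_map_zero a
      · intro u v hu hv a
        have huv : u * v = u + v := by rw [mul_eq_add_lam, hv u]
        rw [huv, lam_add_arg, hu a, hv a]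
      · intro u hu
        have h2 : u⁻¹ = -u := by
          have h3 := lam_inv_lam u u⁻¹
          rw [lam_a_inv, lam_neg_arg, hu u⁻¹] at h3
          exact h3.symm
        intro a
        rw [h2, lam_neg_arg, hu a]
    exact hfrom_univ _ hsub hT
  exact fun a b => hU b a

end Main


/-- A one-generator left brace of multipermutation level 2 yields an
automorphism `ψ` of `(A,+)` and an element `x` whose `ψ`-orbit is nontrivial and
generates `(A,+)`, such that any additive relation `∑ aᵢ ψ^{zᵢ}(x) = 0` forces
`ψ^{∑ aᵢ} = id`. -/
theorem stmt18 {A : Type} [AddCommGroup A] [Group A] [LeftBrace A]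
    (hone : ∃ x : A, braceClosure x = Set.univ) (hmpl : BraceMPL A 2) :
    ∃ (ψ : AddAut A) (x : A),
      (Set.range fun z : ℤ => (z • ψ) x).Nontrivial ∧
      AddSubgroup.closure (Set.range fun z : ℤ => (z • ψ) x) = ⊤ ∧
      ∀ (m : ℕ) (a z : Fin m → ℤ),
        (∑ i, a i • (z i • ψ) x) = 0 → (∑ i, a i) • ψ = 0 := by
  obtain ⟨x, hx⟩ := hone
  have hs : ∀ a b : A, ∀ c, lam (a + b - a * b) c = c := by
    intro a b c
    have h1 : a ∈ socSeq A 2 := by rw [hmpl.1]; trivial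
    have h2 : a + b - a * b ∈ socSeq A 1 := h1 b
    have h4 : (a + b - a * b) + c - (a + b - a * b) * c = 0 := h2 c
    have h5 : (a + b - a * b) * c = (a + b - a * b) + c := by
      rw [sub_eq_zero] at h4; exact h4.symm
    rw [lam_apply', h5]; abel
  set ψ : AddAut A := lamA x with hψdef
  have honeap : ∀ c : A, (0 : AddAut A) c = c := fun c => rfl
  have hpow : ∀ z : ℤ, ∀ c, lam ((z • ψ) x) c = lam x c := by
    intro z
    induction z using Int.induction_on with
    | zero => intro c; rw [zero_zsmul, honeap]
    | succ n ih =>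
      intro c
      have key : (((n : ℤ) + 1) • ψ) x = lam x (((n : ℤ) • ψ) x) := by
        rw [show ((n : ℤ) + 1) = 1 + n by ring, add_zsmul, one_zsmul]
        rfl
      rw [key, lam_lam hs, ih c]
    | pred n ih =>
      intro c
      have key : ((-(n : ℤ)) • ψ) x = lam x (((-(n : ℤ) - 1) • ψ) x) := by
        have e : ψ + (-(n : ℤ) - 1) • ψ = (-(n : ℤ)) • ψ := by
          rw [← one_add_zsmul]
          congr 1
          ring
        rw [← e]
        rfl
      have h2 := lam_lam hs x (((-(n : ℤ) - 1) • ψ) x) c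
      rw [← key] at h2
      exact h2.symm.trans (ih c)
  have hnontriv : lam x x ≠ x := by
    intro hfix
    have hU := degenerate hs hx hfix
    have hsoc1 : socSeq A 1 = Set.univ := by
      ext a
      simp only [Set.mem_univ, iff_true]
      intro b
      show a + b - a * b ∈ ({0} : Set A)
      have hab : a * b = a + b := by rw [mul_eq_add_lam, hU a b]
      simp [hab]
    exact hmpl.2 1 (by norm_num) hsoc1
  refine ⟨ψ, x, ?_, ?_, ?_⟩
  · refine ⟨((1 : ℤ) • ψ) x, ⟨1, rfl⟩, ((0 : ℤ) • ψ) x, ⟨0, rfl⟩, ?_⟩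
    intro h
    apply hnontriv
    rw [one_zsmul, zero_zsmul] at h
    exact h
  · set R := Set.range fun z : ℤ => (z • ψ) x with hR
    set B := AddSubgroup.closure R with hB
    have hψB : ∀ k : ℤ, ∀ u ∈ B, (k • ψ) u ∈ B := by
      intro k u hu
      refine AddSubgroup.closure_induction (p := fun v _ => (k • ψ) v ∈ B) ?_ ?_ ?_ ?_ hu
      · rintro v ⟨z, rfl⟩
        have h1 : (k • ψ) ((z • ψ) x) = ((k + z) • ψ) x := by rw [add_zsmul]; rfl
        rw [h1]; exact AddSubgroup.subset_closure ⟨k + z, rfl⟩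
      · simpa using B.zero_mem
      · intro u v _ _ hu hv
        rw [map_add]; exact B.add_mem hu hv
      · intro u _ hu
        rw [map_neg]; exact B.neg_mem hu
    have hlamB : ∀ u ∈ B, ∃ k : ℤ, ∀ c, lam u c = (k • ψ) c := by
      intro u hu
      refine AddSubgroup.closure_induction
        (p := fun v _ => ∃ k : ℤ, ∀ c, lam v c = (k • ψ) c) ?_ ?_ ?_ ?_ hu
      · rintro v ⟨z, rfl⟩
        exact ⟨1, fun c => by rw [hpow z c, one_zsmul]; rfl⟩
      · exact ⟨0, fun c => by rw [zero_zsmul, honeap]; exact lam_zero_arg0 c⟩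
      · rintro u v _ _ ⟨j, hj⟩ ⟨k, hk⟩
        refine ⟨j + k, fun c => ?_⟩
        rw [lam_add_lam hs, hk, hj, add_zsmul]; rfl
      · rintro u _ ⟨k, hk⟩
        refine ⟨-k, fun c => ?_⟩
        have h1 : lam (-u) (lam u (((-k) • ψ) c)) = ((-k) • ψ) c := by
          rw [← lam_add_lam hs, neg_add_cancel, lam_zero_arg0]
        rw [hk] at h1
        have h2 : (k • ψ) (((-k) • ψ) c) = c := by
          rw [show (k • ψ) (((-k) • ψ) c) = ((k + -k) • ψ) c from by rw [add_zsmul]; rfl,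
            add_neg_cancel, zero_zsmul, honeap]
        rw [h2] at h1
        exact h1
    have hBm : IsSubBrace (B : Set A) := by
      refine isSubBrace_of _ B.zero_mem (fun u v hu hv => B.add_mem hu hv)
        (fun u hu => B.neg_mem hu) ?_ ?_ ?_
      · show (1 : A) ∈ B
        rw [one_eq_zero']; exact B.zero_mem
      · intro u v hu hv
        show u * v ∈ B
        obtain ⟨k, hk⟩ := hlamB u hu
        rw [mul_eq_add_lam, hk v]
        exact B.add_mem hu (hψB k v hv)
      · intro u hu
        show u⁻¹ ∈ B
        obtain ⟨k, hk⟩ := hlamB u hu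
        have h1 : (k • ψ) u⁻¹ = -u := by rw [← hk]; exact lam_a_inv u
        have h2 : u⁻¹ = ((-k) • ψ) (-u) := by
          rw [← h1,
            show ((-k) • ψ) ((k • ψ) u⁻¹) = ((-k + k) • ψ) u⁻¹ from by rw [add_zsmul]; rfl,
            neg_add_cancel, zero_zsmul, honeap]
        rw [h2]
        exact hψB (-k) (-u) (B.neg_mem hu)
    have hxB : x ∈ B := AddSubgroup.subset_closure
      ⟨0, by show ((0 : ℤ) • ψ) x = x; rw [zero_zsmul, honeap]⟩
    have hsubset : braceClosure x ⊆ (B : Set A) :=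
      Set.sInter_subset_of_mem (S := {S : Set A | IsSubBrace S ∧ x ∈ S}) ⟨hBm, hxB⟩
    rw [AddSubgroup.eq_top_iff']
    intro a
    have ha : a ∈ braceClosure x := by rw [hx]; trivial
    exact hsubset ha
  · intro m a z hrel
    have hneglam : ∀ (v : A) (k : ℤ), (∀ c, lam v c = (k • ψ) c) →
        ∀ c, lam (-v) c = ((-k) • ψ) c := by
      intro v k hv c
      have h1 : lam (-v) (lam v (((-k) • ψ) c)) = ((-k) • ψ) c := by
        rw [← lam_add_lam hs, neg_add_cancel, lam_zero_arg0]
      rw [hv] at h1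
      have h2 : (k • ψ) (((-k) • ψ) c) = c := by
        rw [show (k • ψ) (((-k) • ψ) c) = ((k + -k) • ψ) c from by rw [add_zsmul]; rfl,
          add_neg_cancel, zero_zsmul, honeap]
      rw [h2] at h1
      exact h1
    have hzsmul : ∀ (n : ℤ) (v : A) (k : ℤ), (∀ c, lam v c = (k • ψ) c) →
        ∀ c, lam (n • v) c = ((n * k) • ψ) c := by
      intro n
      induction n using Int.induction_on with
      | zero =>
        intro v k hv c
        rw [zero_smul, zero_mul, zero_zsmul, honeap]
        exact lam_zero_arg0 c
      | succ n ih =>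
        intro v k hv c
        rw [show ((n : ℤ) + 1) • v = (n : ℤ) • v + v by rw [add_smul, one_smul],
          lam_add_lam hs, hv, ih v k hv,
          show (((n : ℤ) * k) • ψ) ((k • ψ) c) = (((n : ℤ) * k + k) • ψ) c from by
            rw [add_zsmul]; rfl]
        congr 1
        ring
      | pred n ih =>
        intro v k hv c
        rw [show (-(n : ℤ) - 1) • v = (-(n : ℤ)) • v + -v by rw [sub_smul, neg_smul, one_smul, sub_eq_add_neg],
          lam_add_lam hs, hneglam v k hv, ih v k hv,
          show ((-(n : ℤ) * k) • ψ) (((-k) • ψ) c) = ((-(n : ℤ) * k + -k) • ψ) c from by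
            rw [add_zsmul]; rfl]
        congr 1
        ring
    have hsum : ∀ (s : Finset (Fin m)), ∀ c,
        lam (∑ i ∈ s, a i • (z i • ψ) x) c = ((∑ i ∈ s, a i) • ψ) c := by
      intro s
      induction s using Finset.cons_induction with
      | empty =>
        intro c
        rw [Finset.sum_empty, Finset.sum_empty, zero_zsmul, honeap]
        exact lam_zero_arg0 c
      | cons i s his ih =>
        intro c
        have hvi : ∀ c, lam ((z i • ψ) x) c = ((1 : ℤ) • ψ) c := by
          intro c
          rw [hpow (z i) c, one_zsmul]
          rfl
        rw [Finset.sum_cons, Finset.sum_cons, lam_add_lam hs, ih,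
          show lam (a i • (z i • ψ) x) (((∑ j ∈ s, a j) • ψ) c)
              = ((a i * 1) • ψ) (((∑ j ∈ s, a j) • ψ) c) from
            hzsmul (a i) _ 1 hvi _,
          show ((a i * 1) • ψ) (((∑ j ∈ s, a j) • ψ) c)
              = ((a i * 1 + ∑ j ∈ s, a j) • ψ) c from by rw [add_zsmul]; rfl]
        congr 1
        ring
    ext c
    have h1 := hsum Finset.univ c
    rw [hrel, lam_zero_arg0] at h1
    rw [honeap]
    exact h1.symm
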